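/- arXiv:1906.07065 — 9 statements merged into one kernel-verified Lean document; each statement's English description precedes it below -/
import Mathlib

section
/- Let Λ and Γ be g-Bessel sequences for H and let U ∈ B(ℓ²(⊕_i K_i)). If the generalized multiplier M_{U,Λ,Γ} = T_Λ U T_Γ* is invertible on H, then there exist constants c > 0 such that c‖x‖² ≤ Σ_i ‖Λ_i x‖² and c‖x‖² ≤ Σ_i ‖Γ_i x‖² for all x ∈ H; i.e., both Λ and Γ satisfy the lower g-frame condition. -/
open scoped InnerProductSpace ENNReal
open ContinuousLinearMap

private lemma lp_norm_sq_eq_tsum {ι : Type*} {K : ι → Type*}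
    [∀ i, NormedAddCommGroup (K i)] (f : lp K 2) :
    ‖f‖ ^ 2 = ∑' i, ‖f i‖ ^ 2 := by
  have h := lp.norm_rpow_eq_tsum (p := 2) (by norm_num) f
  have h2 : (2 : ℝ≥0∞).toReal = 2 := by simp
  rw [h2] at h
  simpa [Real.rpow_two] using h

/-- If a generalized multiplier M_{U,Λ,Γ} = T_Λ U T_Γ* of two
g-Bessel sequences is invertible, then both Λ and Γ satisfy the lower
g-frame condition. -/
theorem invertible_multiplier_lower_frame_condition
    {ι H : Type*} {K : ι → Type*}
    [NormedAddCommGroup H] [InnerProductSpace ℂ H] [CompleteSpace H]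
    [∀ i, NormedAddCommGroup (K i)] [∀ i, InnerProductSpace ℂ (K i)]
    [∀ i, CompleteSpace (K i)]
    (Λ Γ : ∀ i, H →L[ℂ] K i) (BΛ BΓ : ℝ)
    (hsumΛ : ∀ x : H, Summable fun i => ‖Λ i x‖ ^ 2)
    (hBesselΛ : ∀ x : H, (∑' i, ‖Λ i x‖ ^ 2) ≤ BΛ * ‖x‖ ^ 2)
    (hsumΓ : ∀ x : H, Summable fun i => ‖Γ i x‖ ^ 2)
    (hBesselΓ : ∀ x : H, (∑' i, ‖Γ i x‖ ^ 2) ≤ BΓ * ‖x‖ ^ 2)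
    (TΛ TΓ : lp K 2 →L[ℂ] H)
    (hTΛ : ∀ x : H, ∀ i, (adjoint TΛ x) i = Λ i x)
    (hTΓ : ∀ x : H, ∀ i, (adjoint TΓ x) i = Γ i x)
    (U : lp K 2 →L[ℂ] lp K 2)
    (hM : IsUnit (TΛ.comp (U.comp (adjoint TΓ)))) :
    ∃ c : ℝ, 0 < c ∧
      (∀ x : H, c * ‖x‖ ^ 2 ≤ ∑' i, ‖Λ i x‖ ^ 2) ∧
      (∀ x : H, c * ‖x‖ ^ 2 ≤ ∑' i, ‖Γ i x‖ ^ 2) := by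
  set M : H →L[ℂ] H := TΛ.comp (U.comp (adjoint TΓ)) with hMdef
  -- inverse N of M
  obtain ⟨u, hu⟩ := hM
  have hNM : ((↑u⁻¹ : H →L[ℂ] H).comp M) = ContinuousLinearMap.id ℂ H := by
    have := u.inv_mul
    rw [hu] at this
    exact this
  set N : H →L[ℂ] H := (↑u⁻¹ : H →L[ℂ] H) with hNdef
  -- adjoint of M is also invertible
  have hMstar : IsUnit (star M) := (IsUnit.star ⟨u, hu⟩)
  obtain ⟨v, hv⟩ := hMstar
  have hNMs : ((↑v⁻¹ : H →L[ℂ] H).comp (star M)) = ContinuousLinearMap.id ℂ H := by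
    have := v.inv_mul
    rw [hv] at this
    exact this
  set N' : H →L[ℂ] H := (↑v⁻¹ : H →L[ℂ] H) with hN'def
  -- star M = TΓ ∘ U* ∘ TΛ*
  have hstarM : star M = TΓ.comp ((adjoint U).comp (adjoint TΛ)) := by
    rw [star_eq_adjoint, hMdef, adjoint_comp, adjoint_comp, adjoint_adjoint]
    ext x
    simp [ContinuousLinearMap.comp_apply]
  -- Γ lower bound: ‖x‖ ≤ ‖AΓ‖ * ‖adjoint TΓ x‖
  set AΓ : lp K 2 →L[ℂ] H := N.comp (TΛ.comp U) with hAΓ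
  have hΓbound : ∀ x : H, ‖x‖ ≤ ‖AΓ‖ * ‖adjoint TΓ x‖ := by
    intro x
    have hx : AΓ (adjoint TΓ x) = x := by
      have := congrArg (fun f => f x) hNM
      simpa [hAΓ, hMdef, ContinuousLinearMap.comp_apply] using this
    calc ‖x‖ = ‖AΓ (adjoint TΓ x)‖ := by rw [hx]
      _ ≤ ‖AΓ‖ * ‖adjoint TΓ x‖ := AΓ.le_opNorm _
  -- Λ lower bound
  set AΛ : lp K 2 →L[ℂ] H := N'.comp (TΓ.comp (adjoint U)) with hAΛ
  have hΛbound : ∀ x : H, ‖x‖ ≤ ‖AΛ‖ * ‖adjoint TΛ x‖ := by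
    intro x
    have hx : AΛ (adjoint TΛ x) = x := by
      have := congrArg (fun f => f x) hNMs
      rw [hstarM] at this
      simpa [hAΛ, ContinuousLinearMap.comp_apply] using this
    calc ‖x‖ = ‖AΛ (adjoint TΛ x)‖ := by rw [hx]
      _ ≤ ‖AΛ‖ * ‖adjoint TΛ x‖ := AΛ.le_opNorm _
  -- combine
  set D : ℝ := max (max ‖AΓ‖ ‖AΛ‖) 1 with hD
  have hD1 : (1 : ℝ) ≤ D := le_max_right _ _
  have hDpos : 0 < D := lt_of_lt_of_le one_pos hD1
  refine ⟨1 / D ^ 2, by positivity, ?_, ?_⟩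
  · intro x
    have h1 : ‖x‖ ≤ D * ‖adjoint TΛ x‖ :=
      (hΛbound x).trans (mul_le_mul_of_nonneg_right
        ((le_max_right _ _).trans (le_max_left _ _)) (norm_nonneg _))
    have h2 : ‖x‖ ^ 2 ≤ D ^ 2 * ‖adjoint TΛ x‖ ^ 2 := by
      calc ‖x‖ ^ 2 ≤ (D * ‖adjoint TΛ x‖) ^ 2 := by
            apply pow_le_pow_left₀ (norm_nonneg _) h1
        _ = D ^ 2 * ‖adjoint TΛ x‖ ^ 2 := by ring
    have h3 : ‖adjoint TΛ x‖ ^ 2 = ∑' i, ‖Λ i x‖ ^ 2 := by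
      rw [lp_norm_sq_eq_tsum]
      exact tsum_congr fun i => by rw [hTΛ]
    rw [div_mul_eq_mul_div, one_mul, div_le_iff₀ (by positivity)]
    rw [h3] at h2
    linarith [h2]
  · intro x
    have h1 : ‖x‖ ≤ D * ‖adjoint TΓ x‖ :=
      (hΓbound x).trans (mul_le_mul_of_nonneg_right
        ((le_max_left _ _).trans (le_max_left _ _)) (norm_nonneg _))
    have h2 : ‖x‖ ^ 2 ≤ D ^ 2 * ‖adjoint TΓ x‖ ^ 2 := by
      calc ‖x‖ ^ 2 ≤ (D * ‖adjoint TΓ x‖) ^ 2 := by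
            apply pow_le_pow_left₀ (norm_nonneg _) h1
        _ = D ^ 2 * ‖adjoint TΓ x‖ ^ 2 := by ring
    have h3 : ‖adjoint TΓ x‖ ^ 2 = ∑' i, ‖Γ i x‖ ^ 2 := by
      rw [lp_norm_sq_eq_tsum]
      exact tsum_congr fun i => by rw [hTΓ]
    rw [div_mul_eq_mul_div, one_mul, div_le_iff₀ (by positivity)]
    rw [h3] at h2
    linarith [h2]
end

section
/- Let Λ be a g-Bessel sequence for H, let U ∈ B(ℓ²(⊕_i K_i)) be a diagonal operator with entries u_i ∈ B(K_i), and let Γ be a g-Bessel sequence such that T := M_{U,Λ,Γ} = T_Λ U T_Γ* is invertible. Then the operator Φ := U T_Γ* − T_Λ* S_Λ^{-1} T satisfies T_Λ Φ = 0, and consequently u_i Γ_i = Λ_i S_Λ^{-1} T + π_i Φ for all i ∈ I, where π_i is the i-th coordinate projection of ℓ²(⊕_i K_i). -/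
open scoped InnerProductSpace ENNReal
open ContinuousLinearMap

/-- If T = M_{U,Λ,Γ} is invertible, then Φ := U T_Γ* − T_Λ* S_Λ⁻¹ T
satisfies T_Λ Φ = 0, hence u_i Γ_i = Λ_i S_Λ⁻¹ T + π_i Φ for all i. -/
theorem construct_gBessel_for_invertible_multiplier
    {ι H : Type*} {K : ι → Type*}
    [NormedAddCommGroup H] [InnerProductSpace ℂ H] [CompleteSpace H]
    [∀ i, NormedAddCommGroup (K i)] [∀ i, InnerProductSpace ℂ (K i)]
    [∀ i, CompleteSpace (K i)]
    (Λ Γ : ∀ i, H →L[ℂ] K i) (BΛ BΓ : ℝ)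
    (hsumΛ : ∀ x : H, Summable fun i => ‖Λ i x‖ ^ 2)
    (hBesselΛ : ∀ x : H, (∑' i, ‖Λ i x‖ ^ 2) ≤ BΛ * ‖x‖ ^ 2)
    (hsumΓ : ∀ x : H, Summable fun i => ‖Γ i x‖ ^ 2)
    (hBesselΓ : ∀ x : H, (∑' i, ‖Γ i x‖ ^ 2) ≤ BΓ * ‖x‖ ^ 2)
    (TΛ TΓ : lp K 2 →L[ℂ] H)
    (hTΛ : ∀ x : H, ∀ i, (adjoint TΛ x) i = Λ i x)
    (hTΓ : ∀ x : H, ∀ i, (adjoint TΓ x) i = Γ i x)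
    (u : ∀ i, K i →L[ℂ] K i) (U : lp K 2 →L[ℂ] lp K 2)
    (hU : ∀ f : lp K 2, ∀ i, (U f) i = u i (f i))
    (SΛ' : H →L[ℂ] H)
    (hSΛ'₁ : (TΛ.comp (adjoint TΛ)).comp SΛ' = ContinuousLinearMap.id ℂ H)
    (hSΛ'₂ : SΛ'.comp (TΛ.comp (adjoint TΛ)) = ContinuousLinearMap.id ℂ H)
    (hMinv : IsUnit (TΛ.comp (U.comp (adjoint TΓ)))) :
    TΛ.comp ((U.comp (adjoint TΓ)) -
        (adjoint TΛ).comp (SΛ'.comp (TΛ.comp (U.comp (adjoint TΓ))))) = 0 ∧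
    ∀ x : H, ∀ i,
      u i (Γ i x) =
        Λ i (SΛ' (TΛ (U (adjoint TΓ x)))) +
        (((U.comp (adjoint TΓ)) -
          (adjoint TΛ).comp (SΛ'.comp (TΛ.comp (U.comp (adjoint TΓ))))) x) i := by
  have hfun : ∀ y : H, TΛ (adjoint TΛ (SΛ' y)) = y := fun y =>
    congrArg (fun f : H →L[ℂ] H => f y) hSΛ'₁
  constructor
  · ext x
    simp only [comp_apply, map_sub, sub_apply, zero_apply]
    rw [hfun]
    abel
  · intro x i
    have h1 : (((U.comp (adjoint TΓ)) -
        (adjoint TΛ).comp (SΛ'.comp (TΛ.comp (U.comp (adjoint TΓ))))) x) i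
        = (U (adjoint TΓ x)) i -
          (adjoint TΛ (SΛ' (TΛ (U (adjoint TΓ x))))) i := by
      simp only [sub_apply, comp_apply]
      rw [lp.coeFn_sub]; rfl
    rw [h1, hU, hTΓ, hTΛ]
    abel
end

section
/- Let Λ be a g-Bessel sequence, Γ a g-frame, and U bounded with M_{U,Λ,Γ} invertible. Define V := Id − T_Γ* M_{U,Λ,Γ}^{-1} T_Λ U on ℓ²(⊕_i K_i). Then ran(V) = ker(T_Λ U). -/
open scoped InnerProductSpace ENNReal
open ContinuousLinearMap

/-- For V := Id − T_Γ* M⁻¹ T_Λ U with M = M_{U,Λ,Γ} invertible,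
one has ran(V) = ker(T_Λ U). -/
theorem range_V_eq_ker_TLambdaU
    {ι H : Type*} {K : ι → Type*}
    [NormedAddCommGroup H] [InnerProductSpace ℂ H] [CompleteSpace H]
    [∀ i, NormedAddCommGroup (K i)] [∀ i, InnerProductSpace ℂ (K i)]
    [∀ i, CompleteSpace (K i)]
    (Λ Γ : ∀ i, H →L[ℂ] K i) (BΛ : ℝ) (AΓ BΓ : ℝ) (hAΓ : 0 < AΓ)
    (hsumΛ : ∀ x : H, Summable fun i => ‖Λ i x‖ ^ 2)
    (hBesselΛ : ∀ x : H, (∑' i, ‖Λ i x‖ ^ 2) ≤ BΛ * ‖x‖ ^ 2)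
    (hsumΓ : ∀ x : H, Summable fun i => ‖Γ i x‖ ^ 2)
    (hframeΓ : ∀ x : H, AΓ * ‖x‖ ^ 2 ≤ (∑' i, ‖Γ i x‖ ^ 2) ∧
      (∑' i, ‖Γ i x‖ ^ 2) ≤ BΓ * ‖x‖ ^ 2)
    (TΛ TΓ : lp K 2 →L[ℂ] H)
    (hTΛ : ∀ x : H, ∀ i, (adjoint TΛ x) i = Λ i x)
    (hTΓ : ∀ x : H, ∀ i, (adjoint TΓ x) i = Γ i x)
    (U : lp K 2 →L[ℂ] lp K 2)
    (M' : H →L[ℂ] H)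
    (hM'₁ : (TΛ.comp (U.comp (adjoint TΓ))).comp M' = ContinuousLinearMap.id ℂ H)
    (hM'₂ : M'.comp (TΛ.comp (U.comp (adjoint TΓ))) = ContinuousLinearMap.id ℂ H) :
    ∀ f : lp K 2,
      (f ∈ Set.range
        (ContinuousLinearMap.id ℂ (lp K 2) - (adjoint TΓ).comp (M'.comp (TΛ.comp U))))
      ↔ TΛ (U f) = 0 := by
  intro f
  constructor
  · rintro ⟨g, rfl⟩
    have h := congrArg (fun T => T (TΛ (U g))) hM'₁
    simp only [ContinuousLinearMap.comp_apply, ContinuousLinearMap.id_apply] at h ⊢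
    simp only [ContinuousLinearMap.sub_apply, ContinuousLinearMap.comp_apply,
      ContinuousLinearMap.id_apply, map_sub, h, sub_self]
  · intro h
    refine ⟨f, ?_⟩
    simp only [ContinuousLinearMap.sub_apply, ContinuousLinearMap.comp_apply,
      ContinuousLinearMap.id_apply, h, map_zero, sub_zero]
end

section
/- Let Λ and Γ be g-Bessel sequences, and let U ∈ B(ℓ²(⊕_i K_i)) be invertible (semi-normalized diagonal). If M_{U,Λ,Γ} = T_Λ U T_Γ* is invertible on H, then dim(ker(T_Γ)) = dim(ker(T_Λ)); i.e., Λ and Γ have the same excess. -/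
open scoped InnerProductSpace ENNReal
open ContinuousLinearMap

/-- For a semi-normalized (invertible) symbol U, invertibility of
M_{U,Λ,Γ} forces the excesses of Λ and Γ to coincide:
dim ker T_Γ = dim ker T_Λ. -/
theorem equal_excess_of_invertible_multiplier
    {ι H : Type*} {K : ι → Type*}
    [NormedAddCommGroup H] [InnerProductSpace ℂ H] [CompleteSpace H]
    [∀ i, NormedAddCommGroup (K i)] [∀ i, InnerProductSpace ℂ (K i)]
    [∀ i, CompleteSpace (K i)]
    (Λ Γ : ∀ i, H →L[ℂ] K i) (BΛ BΓ : ℝ)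
    (hsumΛ : ∀ x : H, Summable fun i => ‖Λ i x‖ ^ 2)
    (hBesselΛ : ∀ x : H, (∑' i, ‖Λ i x‖ ^ 2) ≤ BΛ * ‖x‖ ^ 2)
    (hsumΓ : ∀ x : H, Summable fun i => ‖Γ i x‖ ^ 2)
    (hBesselΓ : ∀ x : H, (∑' i, ‖Γ i x‖ ^ 2) ≤ BΓ * ‖x‖ ^ 2)
    (TΛ TΓ : lp K 2 →L[ℂ] H)
    (hTΛ : ∀ x : H, ∀ i, (adjoint TΛ x) i = Λ i x)
    (hTΓ : ∀ x : H, ∀ i, (adjoint TΓ x) i = Γ i x)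
    (U U' : lp K 2 →L[ℂ] lp K 2)
    (hUU' : U.comp U' = ContinuousLinearMap.id ℂ (lp K 2))
    (hU'U : U'.comp U = ContinuousLinearMap.id ℂ (lp K 2))
    (hM : IsUnit (TΛ.comp (U.comp (adjoint TΓ)))) :
    Module.rank ℂ (LinearMap.ker (TΓ : lp K 2 →ₗ[ℂ] H)) = Module.rank ℂ (LinearMap.ker (TΛ : lp K 2 →ₗ[ℂ] H)) := by
  classical
  set A : H →L[ℂ] lp K 2 := adjoint TΓ with hA
  set M : H →L[ℂ] H := TΛ.comp (U.comp A) with hMdef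
  obtain ⟨u, hu⟩ := hM
  set N : H →L[ℂ] H := ↑u⁻¹ with hNdef
  have hNM : ∀ x : H, N (M x) = x := by
    intro x
    have h := congrArg (fun f : H →L[ℂ] H => f x) u.inv_mul
    simpa [hu, ContinuousLinearMap.mul_apply, ContinuousLinearMap.one_apply] using h
  have hMN : ∀ x : H, M (N x) = x := by
    intro x
    have h := congrArg (fun f : H →L[ℂ] H => f x) u.mul_inv
    simpa [hu, ContinuousLinearMap.mul_apply, ContinuousLinearMap.one_apply] using h
  have hMapp : ∀ x : H, M x = TΛ (U (A x)) := fun x => rfl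
  -- the continuous linear equivalence induced by U
  let eU : lp K 2 ≃L[ℂ] lp K 2 :=
    ContinuousLinearEquiv.equivOfInverse U U'
      (fun x => congrArg (fun f : lp K 2 →L[ℂ] lp K 2 => f x) hU'U)
      (fun x => congrArg (fun f : lp K 2 →L[ℂ] lp K 2 => f x) hUU')
  -- the idempotent Q with range = range A, ker = ker (TΛ ∘ U)
  set Q : lp K 2 →L[ℂ] lp K 2 := A.comp (N.comp (TΛ.comp U)) with hQdef
  have hQapp : ∀ x : lp K 2, Q x = A (N (TΛ (U x))) := fun x => rfl
  set p : Submodule ℂ (lp K 2) := LinearMap.range (A : H →ₗ[ℂ] lp K 2) with hpdef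
  have hproj : LinearMap.IsProj p (Q : lp K 2 →ₗ[ℂ] lp K 2) := by
    constructor
    · intro x
      exact ⟨N (TΛ (U x)), rfl⟩
    · rintro x ⟨h, rfl⟩
      show Q (A h) = A h
      rw [hQapp]
      congr 1
      have : TΛ (U (A h)) = M h := rfl
      rw [this, hNM]
  have hkerQ : LinearMap.ker (Q : lp K 2 →ₗ[ℂ] lp K 2)
      = Submodule.map (eU.symm.toLinearEquiv : lp K 2 →ₗ[ℂ] lp K 2) (LinearMap.ker (TΛ : lp K 2 →ₗ[ℂ] H)) := by
    ext x
    simp only [LinearMap.mem_ker, Submodule.mem_map, LinearMap.mem_ker]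
    constructor
    · intro hx
      refine ⟨U x, ?_, ?_⟩
      · have h1 : TΛ (U (Q x)) = 0 := by
          rw [show (Q : lp K 2 →ₗ[ℂ] lp K 2) x = Q x from rfl] at hx
          rw [hx]; simp
        have h2 : TΛ (U (Q x)) = TΛ (U x) := by
          rw [hQapp]
          have : TΛ (U (A (N (TΛ (U x))))) = M (N (TΛ (U x))) := rfl
          rw [this, hMN]
        exact h2.symm.trans h1
      · exact congrArg (fun f : lp K 2 →L[ℂ] lp K 2 => f x) hU'U
    · rintro ⟨y, hy, rfl⟩
      show Q (U' y) = 0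
      rw [hQapp]
      have hUU'y : U (U' y) = y := congrArg (fun f : lp K 2 →L[ℂ] lp K 2 => f y) hUU'
      rw [hUU'y, show TΛ y = 0 from hy]
      simp
  -- ker TΓ is the orthogonal complement of range A
  have hkerΓ : LinearMap.ker (TΓ : lp K 2 →ₗ[ℂ] H) = pᗮ := by
    ext x
    rw [LinearMap.mem_ker, Submodule.mem_orthogonal]
    constructor
    · intro hx y hy
      obtain ⟨h, rfl⟩ := hy
      show ⟪A h, x⟫_ℂ = 0
      rw [hA, adjoint_inner_left, show TΓ x = 0 from hx, inner_zero_right]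
    · intro hx
      have h := hx (A (TΓ x)) ⟨TΓ x, rfl⟩
      rw [hA, adjoint_inner_left] at h
      exact inner_self_eq_zero.mp h
  -- range A is complete (closed), since A has a continuous left inverse
  set L : H →L[ℂ] H := N with hL
  have hleft : ∀ x : H, (N.comp (TΛ.comp U)) (A x) = x := by
    intro x
    show N (TΛ (U (A x))) = x
    exact hNM x
  have hanti : AntilipschitzWith ‖N.comp (TΛ.comp U)‖₊ A := by
    apply A.antilipschitz_of_bound
    intro x
    calc ‖x‖ = ‖(N.comp (TΛ.comp U)) (A x)‖ := by rw [hleft]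
      _ ≤ ‖N.comp (TΛ.comp U)‖ * ‖A x‖ := (N.comp (TΛ.comp U)).le_opNorm _
  haveI : CompleteSpace p := hanti.completeSpace_range_clm
  have hcompl1 : IsCompl p pᗮ := Submodule.isCompl_orthogonal_of_hasOrthogonalProjection
  have hcompl2 : IsCompl p (LinearMap.ker (Q : lp K 2 →ₗ[ℂ] lp K 2)) := hproj.isCompl
  have e1 := Submodule.quotientEquivOfIsCompl p pᗮ hcompl1
  have e2 := Submodule.quotientEquivOfIsCompl p _ hcompl2
  have e3 := eU.symm.toLinearEquiv.submoduleMap (LinearMap.ker (TΛ : lp K 2 →ₗ[ℂ] H))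
  rw [hkerΓ, ← e1.rank_eq, e2.rank_eq, hkerQ]
  exact e3.symm.rank_eq
end

section
/- Let Λ be a g-Riesz basis for H (i.e., its synthesis operator T_Λ is a bounded bijection from ℓ²(⊕_i K_i) onto H), let U be an invertible bounded operator on ℓ²(⊕_i K_i), and let Γ be a g-Bessel sequence. Then M_{U,Λ,Γ} = T_Λ U T_Γ* is invertible if and only if Γ is a g-Riesz basis. -/
open scoped InnerProductSpace ENNReal
open ContinuousLinearMap

private noncomputable def clmEquivOfBijective {E F : Type*}
    [NormedAddCommGroup E] [NormedAddCommGroup F]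
    [NormedSpace ℂ E] [NormedSpace ℂ F] [CompleteSpace E] [CompleteSpace F]
    (f : E →L[ℂ] F) (hf : Function.Bijective f) : E ≃L[ℂ] F :=
  ContinuousLinearEquiv.ofBijective f
    (LinearMap.ker_eq_bot.2 hf.1) (LinearMap.range_eq_top.2 hf.2)

private lemma adjoint_bijective_of_bijective {E F : Type*}
    [NormedAddCommGroup E] [NormedAddCommGroup F]
    [InnerProductSpace ℂ E] [InnerProductSpace ℂ F]
    [CompleteSpace E] [CompleteSpace F]
    (f : E →L[ℂ] F) (hf : Function.Bijective f) :
    Function.Bijective (adjoint f) := by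
  let e := clmEquivOfBijective f hf
  have he : (e : E →L[ℂ] F) = f := rfl
  have h1 : (adjoint (e.symm : F →L[ℂ] E)).comp (adjoint f) =
      ContinuousLinearMap.id ℂ F := by
    rw [← adjoint_comp, ← he]
    have h : (e : E →L[ℂ] F).comp (e.symm : F →L[ℂ] E) =
        ContinuousLinearMap.id ℂ F := by ext x; simp
    rw [h, adjoint_id]
  have h2 : (adjoint f).comp (adjoint (e.symm : F →L[ℂ] E)) =
      ContinuousLinearMap.id ℂ E := by
    rw [← adjoint_comp, ← he]
    have h : (e.symm : F →L[ℂ] E).comp (e : E →L[ℂ] F) =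
        ContinuousLinearMap.id ℂ E := by ext x; simp
    rw [h, adjoint_id]
  exact Function.bijective_iff_has_inverse.mpr
    ⟨adjoint (e.symm : F →L[ℂ] E),
      fun x => DFunLike.congr_fun h1 x,
      fun x => DFunLike.congr_fun h2 x⟩

/-- If Λ is a g-Riesz basis and U is invertible, then
M_{U,Λ,Γ} is invertible iff Γ is a g-Riesz basis (its synthesis operator is
bijective). -/
theorem multiplier_invertible_iff_gRiesz
    {ι H : Type*} {K : ι → Type*}
    [NormedAddCommGroup H] [InnerProductSpace ℂ H] [CompleteSpace H]
    [∀ i, NormedAddCommGroup (K i)] [∀ i, InnerProductSpace ℂ (K i)]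
    [∀ i, CompleteSpace (K i)]
    (Λ Γ : ∀ i, H →L[ℂ] K i) (BΓ : ℝ)
    (hsumΓ : ∀ x : H, Summable fun i => ‖Γ i x‖ ^ 2)
    (hBesselΓ : ∀ x : H, (∑' i, ‖Γ i x‖ ^ 2) ≤ BΓ * ‖x‖ ^ 2)
    (TΛ TΓ : lp K 2 →L[ℂ] H)
    (hTΛ : ∀ x : H, ∀ i, (adjoint TΛ x) i = Λ i x)
    (hTΓ : ∀ x : H, ∀ i, (adjoint TΓ x) i = Γ i x)
    (hRieszΛ : Function.Bijective TΛ)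
    (U U' : lp K 2 →L[ℂ] lp K 2)
    (hUU' : U.comp U' = ContinuousLinearMap.id ℂ (lp K 2))
    (hU'U : U'.comp U = ContinuousLinearMap.id ℂ (lp K 2)) :
    IsUnit (TΛ.comp (U.comp (adjoint TΓ))) ↔ Function.Bijective TΓ := by
  have hUbij : Function.Bijective U :=
    Function.bijective_iff_has_inverse.mpr
      ⟨U', fun x => DFunLike.congr_fun hU'U x, fun x => DFunLike.congr_fun hUU' x⟩
  have hU'bij : Function.Bijective U' :=
    Function.bijective_iff_has_inverse.mpr
      ⟨U, fun x => DFunLike.congr_fun hUU' x, fun x => DFunLike.congr_fun hU'U x⟩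
  let eΛ := clmEquivOfBijective TΛ hRieszΛ
  constructor
  · intro hM
    obtain ⟨u, hu⟩ := hM
    have hMbij : Function.Bijective (TΛ.comp (U.comp (adjoint TΓ))) := by
      rw [← hu]
      exact (ContinuousLinearEquiv.unitsEquiv ℂ H u).bijective
    have key : Function.Bijective (adjoint TΓ) := by
      have hfun : ⇑(adjoint TΓ) =
          (⇑U') ∘ (⇑eΛ.symm) ∘ ⇑(TΛ.comp (U.comp (adjoint TΓ))) := by
        funext x
        simp only [Function.comp_apply, ContinuousLinearMap.comp_apply]
        have heq : TΛ (U (adjoint TΓ x)) = eΛ (U (adjoint TΓ x)) := rfl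
        rw [heq, ContinuousLinearEquiv.symm_apply_apply]
        exact (DFunLike.congr_fun hU'U (adjoint TΓ x)).symm
      rw [hfun]
      exact hU'bij.comp (eΛ.symm.bijective.comp hMbij)
    have h := adjoint_bijective_of_bijective (adjoint TΓ) key
    rwa [adjoint_adjoint] at h
  · intro hΓ
    have hadjΓ : Function.Bijective (adjoint TΓ) :=
      adjoint_bijective_of_bijective TΓ hΓ
    let eΓ := clmEquivOfBijective (adjoint TΓ) hadjΓ
    let eU := clmEquivOfBijective U hUbij
    let e : H ≃L[ℂ] H := (eΓ.trans eU).trans eΛ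
    refine ⟨(ContinuousLinearEquiv.unitsEquiv ℂ H).symm e, ?_⟩
    have : ((ContinuousLinearEquiv.unitsEquiv ℂ H).symm e : H →L[ℂ] H)
        = (e : H →L[ℂ] H) := rfl
    rw [this]
    ext x
    rfl
end

section
/- Let Λ and Γ be g-Riesz bases for H and U ∈ B(ℓ²(⊕_i K_i)). Then M_{U,Λ,Γ} = T_Λ U T_Γ* is invertible on H if and only if U is invertible; moreover in that case the inverse of M_{U,Λ,Γ} is M_{U^{-1},Γ̃,Λ̃} = T_{Γ̃} U^{-1} T_{Λ̃}*, where Λ̃ = {Λ_i S_Λ^{-1}} and Γ̃ = {Γ_i S_Γ^{-1}} are the canonical duals. -/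
open scoped InnerProductSpace ENNReal
open ContinuousLinearMap

/-- For g-Riesz bases Λ, Γ, the multiplier M_{U,Λ,Γ} is invertible
iff U is invertible, and then its inverse is M_{U⁻¹,Γ̃,Λ̃} = T_{Γ̃} U⁻¹ T_{Λ̃}*,
where T_{Λ̃} = S_Λ⁻¹ T_Λ and T_{Γ̃} = S_Γ⁻¹ T_Γ are the canonical duals. -/
theorem riesz_multiplier_invertible_iff_symbol_invertible
    {ι H : Type*} {K : ι → Type*}
    [NormedAddCommGroup H] [InnerProductSpace ℂ H] [CompleteSpace H]
    [∀ i, NormedAddCommGroup (K i)] [∀ i, InnerProductSpace ℂ (K i)]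
    [∀ i, CompleteSpace (K i)]
    (Λ Γ : ∀ i, H →L[ℂ] K i)
    (TΛ TΓ : lp K 2 →L[ℂ] H)
    (hTΛ : ∀ x : H, ∀ i, (adjoint TΛ x) i = Λ i x)
    (hTΓ : ∀ x : H, ∀ i, (adjoint TΓ x) i = Γ i x)
    (hRieszΛ : Function.Bijective TΛ)
    (hRieszΓ : Function.Bijective TΓ)
    (SΛ' SΓ' : H →L[ℂ] H)
    (hSΛ'₁ : (TΛ.comp (adjoint TΛ)).comp SΛ' = ContinuousLinearMap.id ℂ H)
    (hSΛ'₂ : SΛ'.comp (TΛ.comp (adjoint TΛ)) = ContinuousLinearMap.id ℂ H)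
    (hSΓ'₁ : (TΓ.comp (adjoint TΓ)).comp SΓ' = ContinuousLinearMap.id ℂ H)
    (hSΓ'₂ : SΓ'.comp (TΓ.comp (adjoint TΓ)) = ContinuousLinearMap.id ℂ H)
    (U : lp K 2 →L[ℂ] lp K 2) :
    (IsUnit (TΛ.comp (U.comp (adjoint TΓ))) ↔ IsUnit U) ∧
    (∀ U' : lp K 2 →L[ℂ] lp K 2,
      U.comp U' = ContinuousLinearMap.id ℂ (lp K 2) →
      U'.comp U = ContinuousLinearMap.id ℂ (lp K 2) →
      (TΛ.comp (U.comp (adjoint TΓ))).comp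
          ((SΓ'.comp TΓ).comp (U'.comp (adjoint (SΛ'.comp TΛ)))) =
        ContinuousLinearMap.id ℂ H ∧
      ((SΓ'.comp TΓ).comp (U'.comp (adjoint (SΛ'.comp TΛ)))).comp
          (TΛ.comp (U.comp (adjoint TΓ))) =
        ContinuousLinearMap.id ℂ H) := by
  -- pointwise versions of the frame-operator inverse identities
  have pΛ1 : ∀ y : H, TΛ ((adjoint TΛ) (SΛ' y)) = y := by
    intro y
    have := ContinuousLinearMap.ext_iff.mp hSΛ'₁ y
    simpa using this
  have pΛ2 : ∀ y : H, SΛ' (TΛ ((adjoint TΛ) y)) = y := by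
    intro y
    have := ContinuousLinearMap.ext_iff.mp hSΛ'₂ y
    simpa using this
  have pΓ1 : ∀ y : H, TΓ ((adjoint TΓ) (SΓ' y)) = y := by
    intro y
    have := ContinuousLinearMap.ext_iff.mp hSΓ'₁ y
    simpa using this
  have pΓ2 : ∀ y : H, SΓ' (TΓ ((adjoint TΓ) y)) = y := by
    intro y
    have := ContinuousLinearMap.ext_iff.mp hSΓ'₂ y
    simpa using this
  -- left-inverse identities (using injectivity)
  have qΛ : ∀ x : lp K 2, (adjoint TΛ) (SΛ' (TΛ x)) = x := by
    intro x
    exact hRieszΛ.1 (pΛ1 (TΛ x))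
  have qΓ : ∀ x : lp K 2, (adjoint TΓ) (SΓ' (TΓ x)) = x := by
    intro x
    exact hRieszΓ.1 (pΓ1 (TΓ x))
  -- self-adjointness of SΛ'
  have hselfΛ : adjoint SΛ' = SΛ' := by
    have h1 : (TΛ.comp (adjoint TΛ)).comp (adjoint SΛ') = ContinuousLinearMap.id ℂ H := by
      have := congrArg ContinuousLinearMap.adjoint hSΛ'₂
      rwa [adjoint_comp, adjoint_comp, adjoint_adjoint, adjoint_id] at this
    ext x
    have h1x : TΛ ((adjoint TΛ) ((adjoint SΛ') x)) = x := by
      have := ContinuousLinearMap.ext_iff.mp h1 x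
      simpa using this
    calc (adjoint SΛ') x = SΛ' (TΛ ((adjoint TΛ) ((adjoint SΛ') x))) := (pΛ2 _).symm
      _ = SΛ' x := by rw [h1x]
  -- pointwise form of the claimed canonical dual synthesis adjoint
  have hdual : ∀ x : H, (adjoint (SΛ'.comp TΛ)) x = (adjoint TΛ) (SΛ' x) := by
    intro x
    rw [adjoint_comp, hselfΛ]
    rfl
  -- the key two-sided inverse computation
  have key : ∀ U' : lp K 2 →L[ℂ] lp K 2,
      U.comp U' = ContinuousLinearMap.id ℂ (lp K 2) →
      U'.comp U = ContinuousLinearMap.id ℂ (lp K 2) →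
      (TΛ.comp (U.comp (adjoint TΓ))).comp
          ((SΓ'.comp TΓ).comp (U'.comp (adjoint (SΛ'.comp TΛ)))) =
        ContinuousLinearMap.id ℂ H ∧
      ((SΓ'.comp TΓ).comp (U'.comp (adjoint (SΛ'.comp TΛ)))).comp
          (TΛ.comp (U.comp (adjoint TΓ))) =
        ContinuousLinearMap.id ℂ H := by
    intro U' h1 h2
    have h1p : ∀ z, U (U' z) = z := by
      intro z
      have := ContinuousLinearMap.ext_iff.mp h1 z
      simpa using this
    have h2p : ∀ z, U' (U z) = z := by
      intro z
      have := ContinuousLinearMap.ext_iff.mp h2 z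
      simpa using this
    constructor
    · refine ContinuousLinearMap.ext fun x => ?_
      simp only [comp_apply, ContinuousLinearMap.id_apply, hdual]
      rw [qΓ, h1p, pΛ1]
    · refine ContinuousLinearMap.ext fun x => ?_
      simp only [comp_apply, ContinuousLinearMap.id_apply, hdual]
      rw [qΛ, h2p, pΓ2]
  refine ⟨⟨?_, ?_⟩, key⟩
  · -- M unit → U unit
    intro hM
    obtain ⟨u, hu⟩ := hM
    set N : H →L[ℂ] H := ↑u⁻¹ with hN
    have hMN : (TΛ.comp (U.comp (adjoint TΓ))).comp N = ContinuousLinearMap.id ℂ H := by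
      rw [← hu]
      exact u.mul_inv
    have hNM : N.comp (TΛ.comp (U.comp (adjoint TΓ))) = ContinuousLinearMap.id ℂ H := by
      rw [← hu]
      exact u.inv_mul
    have hMNp : ∀ y, TΛ (U ((adjoint TΓ) (N y))) = y := by
      intro y
      have := ContinuousLinearMap.ext_iff.mp hMN y
      simpa using this
    have hNMp : ∀ y, N (TΛ (U ((adjoint TΓ) y))) = y := by
      intro y
      have := ContinuousLinearMap.ext_iff.mp hNM y
      simpa using this
    refine isUnit_iff_exists.mpr ⟨(adjoint TΓ).comp (N.comp TΛ), ?_, ?_⟩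
    · -- U * V = 1
      refine ContinuousLinearMap.ext fun x => ?_
      simp only [ContinuousLinearMap.mul_apply, ContinuousLinearMap.one_apply, comp_apply]
      apply hRieszΛ.1
      exact hMNp (TΛ x)
    · -- V * U = 1
      refine ContinuousLinearMap.ext fun x => ?_
      simp only [ContinuousLinearMap.mul_apply, ContinuousLinearMap.one_apply, comp_apply]
      conv_lhs => rw [← qΓ x]
      rw [hNMp (SΓ' (TΓ x))]
      exact qΓ x
  · -- U unit → M unit
    intro hU
    obtain ⟨u, hu⟩ := hU
    have h1 : U.comp (↑u⁻¹ : lp K 2 →L[ℂ] lp K 2) = ContinuousLinearMap.id ℂ (lp K 2) := by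
      rw [← hu]
      exact u.mul_inv
    have h2 : (↑u⁻¹ : lp K 2 →L[ℂ] lp K 2).comp U = ContinuousLinearMap.id ℂ (lp K 2) := by
      rw [← hu]
      exact u.inv_mul
    obtain ⟨k1, k2⟩ := key ↑u⁻¹ h1 h2
    exact isUnit_iff_exists.mpr ⟨(SΓ'.comp TΓ).comp ((↑u⁻¹ : lp K 2 →L[ℂ] lp K 2).comp
      (adjoint (SΛ'.comp TΛ))), k1, k2⟩
end

section
/- Let Λ and Γ be g-frames for H, U = diag{u_i} semi-normalized (each u_i and the diagonal operator with entries u_i^{-1} bounded invertible), and suppose M := M_{U,Λ,Γ} is invertible. Then Γ† := {u_i* Λ_i (M^{-1})*}_{i∈I} is a dual g-frame of Γ (i.e., T_Γ T_{Γ†}* = Id_H), and for every dual g-frame Λ^d of Λ one has M^{-1} = T_{Γ†} U^{-1} T_{Λ^d}*. -/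
open scoped InnerProductSpace ENNReal
open ContinuousLinearMap

section Aux

variable {ι : Type*} {K : ι → Type*}
    [∀ i, NormedAddCommGroup (K i)] [∀ i, InnerProductSpace ℂ (K i)]
    [∀ i, CompleteSpace (K i)]

private lemma diag_single [DecidableEq ι]
    (u : ∀ i, K i →L[ℂ] K i) (U : lp K 2 →L[ℂ] lp K 2)
    (hU : ∀ f : lp K 2, ∀ i, (U f) i = u i (f i)) (i : ι) (k : K i) :
    U (lp.single 2 i k) = lp.single 2 i (u i k) := by
  apply lp.ext
  funext j
  rw [hU]
  by_cases h : j = i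
  · subst h; simp [lp.single_apply_self]
  · rw [lp.single_apply_ne _ _ _ h, lp.single_apply_ne _ _ _ h]; simp

private lemma diag_adjoint_apply [DecidableEq ι]
    (u : ∀ i, K i →L[ℂ] K i) (U : lp K 2 →L[ℂ] lp K 2)
    (hU : ∀ f : lp K 2, ∀ i, (U f) i = u i (f i)) (g : lp K 2) (i : ι) :
    (adjoint U g) i = adjoint (u i) (g i) := by
  apply ext_inner_right ℂ
  intro k
  rw [adjoint_inner_left, ← lp.inner_single_right, adjoint_inner_left,
    diag_single u U hU, lp.inner_single_right]

private lemma diag_norm_le [DecidableEq ι]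
    (u : ∀ i, K i →L[ℂ] K i) (U : lp K 2 →L[ℂ] lp K 2)
    (hU : ∀ f : lp K 2, ∀ i, (U f) i = u i (f i)) (i : ι) (k : K i) :
    ‖u i k‖ ≤ ‖U‖ * ‖k‖ := by
  have h1 : ‖(U (lp.single 2 i k) : lp K 2) i‖ ≤ ‖U (lp.single 2 i k)‖ :=
    lp.norm_apply_le_norm (by norm_num) _ i
  have h2 : ‖U (lp.single 2 i k)‖ ≤ ‖U‖ * ‖lp.single 2 i k‖ := le_opNorm _ _
  have h3 : ‖lp.single 2 i k‖ = ‖k‖ := by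
    have := lp.norm_single (p := 2) (E := K) (by norm_num)
      i k
    simpa using this
  rw [hU, lp.single_apply_self] at h1
  calc ‖u i k‖ ≤ ‖U (lp.single 2 i k)‖ := h1
  _ ≤ ‖U‖ * ‖k‖ := by rw [← h3]; exact h2

end Aux

set_option maxHeartbeats 1000000 in
/-- For g-frames Λ, Γ, a semi-normalized diagonal symbol U, and an
invertible multiplier M, the sequence Γ† = {u_i* Λ_i (M⁻¹)*} is a dual g-frame
of Γ and M⁻¹ = T_{Γ†} U⁻¹ T_{Λᵈ}* for every dual g-frame Λᵈ of Λ. -/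
theorem inverse_multiplier_representation
    {ι H : Type*} {K : ι → Type*}
    [NormedAddCommGroup H] [InnerProductSpace ℂ H] [CompleteSpace H]
    [∀ i, NormedAddCommGroup (K i)] [∀ i, InnerProductSpace ℂ (K i)]
    [∀ i, CompleteSpace (K i)]
    (Λ Γ : ∀ i, H →L[ℂ] K i) (AΛ BΛ AΓ BΓ : ℝ) (hAΛ : 0 < AΛ) (hAΓ : 0 < AΓ)
    (hsumΛ : ∀ x : H, Summable fun i => ‖Λ i x‖ ^ 2)
    (hframeΛ : ∀ x : H, AΛ * ‖x‖ ^ 2 ≤ (∑' i, ‖Λ i x‖ ^ 2) ∧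
      (∑' i, ‖Λ i x‖ ^ 2) ≤ BΛ * ‖x‖ ^ 2)
    (hsumΓ : ∀ x : H, Summable fun i => ‖Γ i x‖ ^ 2)
    (hframeΓ : ∀ x : H, AΓ * ‖x‖ ^ 2 ≤ (∑' i, ‖Γ i x‖ ^ 2) ∧
      (∑' i, ‖Γ i x‖ ^ 2) ≤ BΓ * ‖x‖ ^ 2)
    (TΛ TΓ : lp K 2 →L[ℂ] H)
    (hTΛ : ∀ x : H, ∀ i, (adjoint TΛ x) i = Λ i x)
    (hTΓ : ∀ x : H, ∀ i, (adjoint TΓ x) i = Γ i x)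
    -- semi-normalized diagonal symbol U with diagonal inverse U'
    (u u' : ∀ i, K i →L[ℂ] K i)
    (hu : ∀ i, (u i).comp (u' i) = ContinuousLinearMap.id ℂ (K i) ∧
      (u' i).comp (u i) = ContinuousLinearMap.id ℂ (K i))
    (U U' : lp K 2 →L[ℂ] lp K 2)
    (hU : ∀ f : lp K 2, ∀ i, (U f) i = u i (f i))
    (hU' : ∀ f : lp K 2, ∀ i, (U' f) i = u' i (f i))
    -- M and its inverse M'
    (M' : H →L[ℂ] H)
    (hM'₁ : (TΛ.comp (U.comp (adjoint TΓ))).comp M' = ContinuousLinearMap.id ℂ H)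
    (hM'₂ : M'.comp (TΛ.comp (U.comp (adjoint TΓ))) = ContinuousLinearMap.id ℂ H)
    -- the sequence Γ† := {u_i* ∘ Λ_i ∘ (M⁻¹)*}
    (Γd : ∀ i, H →L[ℂ] K i)
    (hΓd : ∀ x : H, ∀ i, Γd i x = adjoint (u i) (Λ i (adjoint M' x))) :
    ∃ TΓd : lp K 2 →L[ℂ] H,
      (∀ x : H, ∀ i, (adjoint TΓd x) i = Γd i x) ∧
      -- Γ† is a g-frame
      (∃ A B : ℝ, 0 < A ∧ ∀ x : H, (Summable fun i => ‖Γd i x‖ ^ 2) ∧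
        A * ‖x‖ ^ 2 ≤ (∑' i, ‖Γd i x‖ ^ 2) ∧ (∑' i, ‖Γd i x‖ ^ 2) ≤ B * ‖x‖ ^ 2) ∧
      -- Γ† is a dual g-frame of Γ
      TΓ.comp (adjoint TΓd) = ContinuousLinearMap.id ℂ H ∧
      -- M⁻¹ = T_{Γ†} U⁻¹ T_{Λᵈ}* for every dual g-frame Λᵈ of Λ
      (∀ (Λd : ∀ i, H →L[ℂ] K i) (TΛd : lp K 2 →L[ℂ] H),
        (∀ x : H, ∀ i, (adjoint TΛd x) i = Λd i x) →
        TΛ.comp (adjoint TΛd) = ContinuousLinearMap.id ℂ H →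
        M' = TΓd.comp (U'.comp (adjoint TΛd))) := by
  classical
  -- adjoint norm bounds for the diagonal entries
  have hnu : ∀ (i : ι) (k : K i), ‖adjoint (u i) k‖ ≤ ‖U‖ * ‖k‖ := by
    intro i k
    have h : ‖adjoint (u i)‖ ≤ ‖U‖ := by
      rw [ContinuousLinearMap.adjoint.norm_map]
      exact (u i).opNorm_le_bound (norm_nonneg U) (diag_norm_le u U hU i)
    calc ‖adjoint (u i) k‖ ≤ ‖adjoint (u i)‖ * ‖k‖ := le_opNorm _ _
    _ ≤ ‖U‖ * ‖k‖ := by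
        exact mul_le_mul_of_nonneg_right h (norm_nonneg _)
  have hnu' : ∀ (i : ι) (k : K i), ‖adjoint (u' i) k‖ ≤ ‖U'‖ * ‖k‖ := by
    intro i k
    have h : ‖adjoint (u' i)‖ ≤ ‖U'‖ := by
      rw [ContinuousLinearMap.adjoint.norm_map]
      exact (u' i).opNorm_le_bound (norm_nonneg U') (diag_norm_le u' U' hU' i)
    calc ‖adjoint (u' i) k‖ ≤ ‖adjoint (u' i)‖ * ‖k‖ := le_opNorm _ _
    _ ≤ ‖U'‖ * ‖k‖ := mul_le_mul_of_nonneg_right h (norm_nonneg _)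
  -- the multiplier operator
  have Mop : H →L[ℂ] H := TΛ.comp (U.comp (adjoint TΓ))
  refine ⟨M'.comp (TΛ.comp U), ?_, ?_, ?_, ?_⟩
  · -- adjoint formula
    intro x i
    have hc : adjoint (M'.comp (TΛ.comp U))
        = (adjoint U).comp ((adjoint TΛ).comp (adjoint M')) := by
      simp [adjoint_comp, ContinuousLinearMap.comp_assoc]
    rw [hc]
    simp only [ContinuousLinearMap.comp_apply]
    rw [diag_adjoint_apply u U hU, hTΛ, hΓd]
  · -- frame bounds
    refine ⟨AΛ / ((‖U'‖ + 1) ^ 2 * (‖TΛ.comp (U.comp (adjoint TΓ))‖ + 1) ^ 2),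
      ‖U‖ ^ 2 * (max BΛ 0 * ‖M'‖ ^ 2), ?_, ?_⟩
    · apply div_pos hAΛ
      positivity
    intro x
    set y : H := adjoint M' x with hy
    have hbd : ∀ i, ‖Γd i x‖ ≤ ‖U‖ * ‖Λ i y‖ := by
      intro i; rw [hΓd]; exact hnu i _
    have hbd2 : ∀ i, ‖Γd i x‖ ^ 2 ≤ ‖U‖ ^ 2 * ‖Λ i y‖ ^ 2 := by
      intro i
      rw [← mul_pow]
      exact pow_le_pow_left₀ (norm_nonneg _) (hbd i) 2
    have hsummG : Summable fun i => ‖Γd i x‖ ^ 2 := by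
      refine Summable.of_nonneg_of_le (fun i => by positivity) hbd2 ?_
      exact (hsumΛ y).mul_left _
    refine ⟨hsummG, ?_, ?_⟩
    · -- lower bound
      have hrev : ∀ i, ‖Λ i y‖ ≤ (‖U'‖ + 1) * ‖Γd i x‖ := by
        intro i
        have h1 : adjoint (u' i) (Γd i x) = Λ i y := by
          rw [hΓd, ← ContinuousLinearMap.comp_apply, ← adjoint_comp, (hu i).1]
          simp [adjoint_id, hy]
        calc ‖Λ i y‖ = ‖adjoint (u' i) (Γd i x)‖ := by rw [h1]
        _ ≤ ‖U'‖ * ‖Γd i x‖ := hnu' i _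
        _ ≤ (‖U'‖ + 1) * ‖Γd i x‖ := by
            apply mul_le_mul_of_nonneg_right (by linarith) (norm_nonneg _)
      have hrev2 : ∀ i, ‖Λ i y‖ ^ 2 ≤ (‖U'‖ + 1) ^ 2 * ‖Γd i x‖ ^ 2 := by
        intro i
        rw [← mul_pow]
        exact pow_le_pow_left₀ (norm_nonneg _) (hrev i) 2
      have hsum1 : (∑' i, ‖Λ i y‖ ^ 2) ≤ (‖U'‖ + 1) ^ 2 * ∑' i, ‖Γd i x‖ ^ 2 := by
        rw [← tsum_mul_left]
        exact Summable.tsum_le_tsum hrev2 (hsumΛ y) (hsummG.mul_left _)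
      have hxy : ‖x‖ ≤ (‖TΛ.comp (U.comp (adjoint TΓ))‖ + 1) * ‖y‖ := by
        have hid : (adjoint (TΛ.comp (U.comp (adjoint TΓ)))).comp (adjoint M') = ContinuousLinearMap.id ℂ H := by
          rw [← adjoint_comp, hM'₂, adjoint_id]
        have hx : adjoint (TΛ.comp (U.comp (adjoint TΓ))) y = x := by
          have := congrArg (fun T : H →L[ℂ] H => T x) hid
          simpa using this
        calc ‖x‖ = ‖adjoint (TΛ.comp (U.comp (adjoint TΓ))) y‖ := by rw [hx]
        _ ≤ ‖adjoint (TΛ.comp (U.comp (adjoint TΓ)))‖ * ‖y‖ := le_opNorm _ _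
        _ ≤ (‖TΛ.comp (U.comp (adjoint TΓ))‖ + 1) * ‖y‖ := by
            apply mul_le_mul_of_nonneg_right _ (norm_nonneg _)
            rw [ContinuousLinearMap.adjoint.norm_map]
            linarith
      have hx2 : ‖x‖ ^ 2 ≤ (‖TΛ.comp (U.comp (adjoint TΓ))‖ + 1) ^ 2 * ‖y‖ ^ 2 := by
        rw [← mul_pow]
        exact pow_le_pow_left₀ (norm_nonneg _) hxy 2
      have hlow : AΛ * ‖y‖ ^ 2 ≤ ∑' i, ‖Λ i y‖ ^ 2 := (hframeΛ y).1
      have hC : (0:ℝ) < (‖U'‖ + 1) ^ 2 * (‖TΛ.comp (U.comp (adjoint TΓ))‖ + 1) ^ 2 := by positivity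
      rw [div_mul_eq_mul_div, div_le_iff₀ hC]
      calc AΛ * ‖x‖ ^ 2 ≤ AΛ * ((‖TΛ.comp (U.comp (adjoint TΓ))‖ + 1) ^ 2 * ‖y‖ ^ 2) :=
            mul_le_mul_of_nonneg_left hx2 hAΛ.le
      _ = (‖TΛ.comp (U.comp (adjoint TΓ))‖ + 1) ^ 2 * (AΛ * ‖y‖ ^ 2) := by ring
      _ ≤ (‖TΛ.comp (U.comp (adjoint TΓ))‖ + 1) ^ 2 * ∑' i, ‖Λ i y‖ ^ 2 :=
            mul_le_mul_of_nonneg_left hlow (by positivity)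
      _ ≤ (‖TΛ.comp (U.comp (adjoint TΓ))‖ + 1) ^ 2 * ((‖U'‖ + 1) ^ 2 * ∑' i, ‖Γd i x‖ ^ 2) :=
            mul_le_mul_of_nonneg_left hsum1 (by positivity)
      _ = (∑' i, ‖Γd i x‖ ^ 2) * ((‖U'‖ + 1) ^ 2 * (‖TΛ.comp (U.comp (adjoint TΓ))‖ + 1) ^ 2) := by ring
    · -- upper bound
      have hsum2 : (∑' i, ‖Γd i x‖ ^ 2) ≤ ‖U‖ ^ 2 * ∑' i, ‖Λ i y‖ ^ 2 := by
        rw [← tsum_mul_left]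
        exact Summable.tsum_le_tsum hbd2 hsummG ((hsumΛ y).mul_left _)
      have hup : (∑' i, ‖Λ i y‖ ^ 2) ≤ max BΛ 0 * ‖y‖ ^ 2 := by
        calc (∑' i, ‖Λ i y‖ ^ 2) ≤ BΛ * ‖y‖ ^ 2 := (hframeΛ y).2
        _ ≤ max BΛ 0 * ‖y‖ ^ 2 :=
            mul_le_mul_of_nonneg_right (le_max_left _ _) (by positivity)
      have hyx : ‖y‖ ^ 2 ≤ ‖M'‖ ^ 2 * ‖x‖ ^ 2 := by
        rw [← mul_pow]
        apply pow_le_pow_left₀ (norm_nonneg _) _ 2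
        calc ‖y‖ ≤ ‖adjoint M'‖ * ‖x‖ := le_opNorm _ _
        _ = ‖M'‖ * ‖x‖ := by rw [ContinuousLinearMap.adjoint.norm_map]
      calc (∑' i, ‖Γd i x‖ ^ 2) ≤ ‖U‖ ^ 2 * ∑' i, ‖Λ i y‖ ^ 2 := hsum2
      _ ≤ ‖U‖ ^ 2 * (max BΛ 0 * ‖y‖ ^ 2) := mul_le_mul_of_nonneg_left hup (by positivity)
      _ ≤ ‖U‖ ^ 2 * (max BΛ 0 * (‖M'‖ ^ 2 * ‖x‖ ^ 2)) := by
          apply mul_le_mul_of_nonneg_left _ (by positivity)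
          exact mul_le_mul_of_nonneg_left hyx (le_max_right _ _)
      _ = ‖U‖ ^ 2 * (max BΛ 0 * ‖M'‖ ^ 2) * ‖x‖ ^ 2 := by ring
  · -- duality
    have key : TΓ.comp (adjoint (M'.comp (TΛ.comp U)))
        = adjoint (M'.comp (TΛ.comp (U.comp (adjoint TΓ)))) := by
      simp only [adjoint_comp, adjoint_adjoint]
      ext x
      rfl
    rw [key, hM'₂, adjoint_id]
  · -- inverse formula
    intro Λd TΛd hTΛd hdual
    have hUU' : U.comp U' = ContinuousLinearMap.id ℂ (lp K 2) := by
      apply ContinuousLinearMap.ext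
      intro f
      apply lp.ext
      funext i
      simp only [ContinuousLinearMap.comp_apply, ContinuousLinearMap.id_apply]
      rw [hU, hU', ← ContinuousLinearMap.comp_apply, (hu i).1]
      rfl
    have : (M'.comp (TΛ.comp U)).comp (U'.comp (adjoint TΛd))
        = M'.comp (TΛ.comp ((U.comp U').comp (adjoint TΛd))) := by
      simp [ContinuousLinearMap.comp_assoc]
    rw [this, hUU', ContinuousLinearMap.id_comp, hdual]
    simp
end

section
/- Let Λ be a g-frame for H with synthesis operator T_Λ. If Γ† and Γ‡ are two g-Bessel sequences such that T_{Λ^d} T_{Γ†}* = T_{Λ^d} T_{Γ‡}* for every dual g-frame Λ^d of Λ, then Γ† = Γ‡ (i.e., T_{Γ†}* = T_{Γ‡}*). -/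
open scoped InnerProductSpace ENNReal
open ContinuousLinearMap

noncomputable def evalCLM {ι : Type*} (K : ι → Type*) [∀ i, NormedAddCommGroup (K i)]
    [∀ i, InnerProductSpace ℂ (K i)] (i : ι) : lp K 2 →L[ℂ] K i :=
  LinearMap.mkContinuous
    { toFun := fun f => f i
      map_add' := fun f g => by simp [lp.coeFn_add]
      map_smul' := fun c f => by simp [lp.coeFn_smul] }
    1 (fun f => by show ‖f i‖ ≤ 1 * ‖f‖; simpa using lp.norm_apply_le_norm two_ne_zero f i)

lemma lp_norm_sq {ι : Type*} {K : ι → Type*} [∀ i, NormedAddCommGroup (K i)]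
    [∀ i, InnerProductSpace ℂ (K i)] (f : lp K 2) : ‖f‖ ^ 2 = ∑' i, ‖f i‖ ^ 2 := by
  have h := lp.norm_rpow_eq_tsum (p := 2) (by norm_num) f
  have h2 : (2 : ℝ≥0∞).toReal = (2:ℝ) := by norm_num
  rw [h2] at h
  calc ‖f‖ ^ 2 = ‖f‖ ^ (2:ℝ) := by rw [← Real.rpow_natCast]; norm_num
  _ = ∑' i, ‖f i‖ ^ (2:ℝ) := h
  _ = ∑' i, ‖f i‖ ^ 2 := by
      refine tsum_congr fun i => ?_
      rw [← Real.rpow_natCast]; norm_num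

set_option maxHeartbeats 1000000 in
/-- If two g-Bessel sequences Γ†, Γ‡ satisfy
T_{Λᵈ} T_{Γ†}* = T_{Λᵈ} T_{Γ‡}* for every dual g-frame Λᵈ of a g-frame Λ,
then Γ† = Γ‡. -/
theorem uniqueness_from_all_duals
    {ι H : Type*} {K : ι → Type*}
    [NormedAddCommGroup H] [InnerProductSpace ℂ H] [CompleteSpace H]
    [∀ i, NormedAddCommGroup (K i)] [∀ i, InnerProductSpace ℂ (K i)]
    [∀ i, CompleteSpace (K i)]
    (Λ : ∀ i, H →L[ℂ] K i) (AΛ BΛ : ℝ) (hAΛ : 0 < AΛ)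
    (hsumΛ : ∀ x : H, Summable fun i => ‖Λ i x‖ ^ 2)
    (hframeΛ : ∀ x : H, AΛ * ‖x‖ ^ 2 ≤ (∑' i, ‖Λ i x‖ ^ 2) ∧
      (∑' i, ‖Λ i x‖ ^ 2) ≤ BΛ * ‖x‖ ^ 2)
    (TΛ : lp K 2 →L[ℂ] H)
    (hTΛ : ∀ x : H, ∀ i, (adjoint TΛ x) i = Λ i x)
    (Γ1 Γ2 : ∀ i, H →L[ℂ] K i) (B1 B2 : ℝ)
    (hsum1 : ∀ x : H, Summable fun i => ‖Γ1 i x‖ ^ 2)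
    (hBessel1 : ∀ x : H, (∑' i, ‖Γ1 i x‖ ^ 2) ≤ B1 * ‖x‖ ^ 2)
    (hsum2 : ∀ x : H, Summable fun i => ‖Γ2 i x‖ ^ 2)
    (hBessel2 : ∀ x : H, (∑' i, ‖Γ2 i x‖ ^ 2) ≤ B2 * ‖x‖ ^ 2)
    (TΓ1 TΓ2 : lp K 2 →L[ℂ] H)
    (hTΓ1 : ∀ x : H, ∀ i, (adjoint TΓ1 x) i = Γ1 i x)
    (hTΓ2 : ∀ x : H, ∀ i, (adjoint TΓ2 x) i = Γ2 i x)
    (h : ∀ (Λd : ∀ i, H →L[ℂ] K i) (TΛd : lp K 2 →L[ℂ] H),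
      (∀ x : H, ∀ i, (adjoint TΛd x) i = Λd i x) →
      TΛ.comp (adjoint TΛd) = ContinuousLinearMap.id ℂ H →
      TΛd.comp (adjoint TΓ1) = TΛd.comp (adjoint TΓ2)) :
    Γ1 = Γ2 := by
  rcases subsingleton_or_nontrivial H with hs | hnt
  · funext i; ext x
    have hx : x = (0 : H) := Subsingleton.elim x 0
    simp [hx]
  set B : H →L[ℂ] lp K 2 := adjoint TΛ with hB
  have hBnormsq : ∀ x : H, ‖B x‖ ^ 2 = ∑' i, ‖Λ i x‖ ^ 2 := by
    intro x
    rw [lp_norm_sq]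
    exact tsum_congr fun i => by rw [hTΛ x i]
  set S : H →L[ℂ] H := TΛ.comp B with hS
  have hSinner : ∀ x : H, (⟪B x, B x⟫_ℂ) = ⟪S x, x⟫_ℂ := by
    intro x
    rw [hS]
    exact adjoint_inner_right TΛ (B x) x
  have hlow : ∀ x : H, AΛ * ‖x‖ ^ 2 ≤ ‖B x‖ ^ 2 := by
    intro x; rw [hBnormsq]; exact (hframeΛ x).1
  have hre : ∀ x : H, ‖B x‖ ^ 2 = RCLike.re ⟪S x, x⟫_ℂ := by
    intro x
    rw [← hSinner x, inner_self_eq_norm_sq]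
  have hbound : ∀ x : H, AΛ * ‖x‖ ^ 2 ≤ ‖S x‖ * ‖x‖ := by
    intro x
    calc AΛ * ‖x‖ ^ 2 ≤ ‖B x‖ ^ 2 := hlow x
    _ = RCLike.re ⟪S x, x⟫_ℂ := hre x
    _ ≤ ‖S x‖ * ‖x‖ := re_inner_le_norm _ _
  have hnormlow : ∀ x : H, AΛ * ‖x‖ ≤ ‖S x‖ := by
    intro x
    rcases eq_or_ne x 0 with rfl | hx
    · simp
    · have hxpos : (0:ℝ) < ‖x‖ := norm_pos_iff.mpr hx
      have := hbound x
      rw [pow_two, ← mul_assoc] at this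
      exact le_of_mul_le_mul_right this hxpos
  have hker : LinearMap.ker (S : H →ₗ[ℂ] H) = ⊥ := by
    rw [LinearMap.ker_eq_bot']
    intro x hx
    have := hnormlow x
    rw [show S x = 0 from hx] at this
    simp at this
    have : ‖x‖ ≤ 0 := nonpos_of_mul_nonpos_right ?_ hAΛ |>.trans le_rfl
    · exact norm_le_zero_iff.mp this
    · simpa using this
  have hclosed : IsClosed (Set.range S) := by
    have hK : (0:ℝ) ≤ AΛ⁻¹ := le_of_lt (inv_pos.mpr hAΛ)
    have hal : AntilipschitzWith (AΛ⁻¹).toNNReal S := by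
      refine ContinuousLinearMap.antilipschitz_of_bound S fun x => ?_
      rw [Real.coe_toNNReal _ hK, inv_mul_eq_div, le_div_iff₀ hAΛ, mul_comm]
      exact hnormlow x
    exact hal.isClosed_range S.uniformContinuous
  have hrange : LinearMap.range (S : H →ₗ[ℂ] H) = ⊤ := by
    have hcl : IsClosed ((LinearMap.range (S : H →ₗ[ℂ] H) : Submodule ℂ H) : Set H) := by
      rw [LinearMap.coe_range]; exact hclosed
    haveI : CompleteSpace (LinearMap.range (S : H →ₗ[ℂ] H)) := hcl.completeSpace_coe
    rw [← Submodule.orthogonal_eq_bot_iff, Submodule.eq_bot_iff]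
    intro y hy
    have h0 : ⟪S y, y⟫_ℂ = 0 :=
      (Submodule.mem_orthogonal _ y).mp hy (S y) (LinearMap.mem_range_self _ y)
    have h1 : ‖B y‖ ^ 2 = 0 := by rw [hre y, h0]; simp
    have h2 := hlow y
    rw [h1] at h2
    have h3 : ‖y‖ ^ 2 ≤ 0 := by nlinarith [sq_nonneg ‖y‖]
    have h4 : ‖y‖ = 0 := by nlinarith [norm_nonneg y]
    exact norm_eq_zero.mp h4
  set E : H ≃L[ℂ] H := ContinuousLinearEquiv.ofBijective S hker hrange with hE
  set Sinv : H →L[ℂ] H := (E.symm : H →L[ℂ] H) with hSinv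
  have hSinvS : Sinv.comp S = ContinuousLinearMap.id ℂ H := by
    ext y
    exact ContinuousLinearEquiv.ofBijective_symm_apply_apply S hker hrange y
  have hSadj : adjoint S = S := by
    rw [hS, adjoint_comp, hB, adjoint_adjoint]
  have hSadjinv : S.comp (adjoint Sinv) = ContinuousLinearMap.id ℂ H := by
    have h1 := congrArg (fun T => adjoint T) hSinvS
    simp only [adjoint_comp, hSadj, adjoint_id] at h1
    exact h1
  set TΛd0 : lp K 2 →L[ℂ] H := Sinv.comp TΛ with hTΛd0
  have hdual0 : TΛ.comp (adjoint TΛd0) = ContinuousLinearMap.id ℂ H := by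
    rw [hTΛd0, adjoint_comp, ← ContinuousLinearMap.comp_assoc]
    exact hSadjinv
  have h0 := h (fun i => (evalCLM K i).comp (adjoint TΛd0)) TΛd0 (fun x i => rfl) hdual0
  have key : ∀ Φ : lp K 2 →L[ℂ] H, Φ.comp B = 0 →
      Φ.comp (adjoint TΓ1) = Φ.comp (adjoint TΓ2) := by
    intro Φ hΦ
    have hTadj : TΛ.comp (adjoint Φ) = 0 := by
      have h1 := congrArg (fun T => adjoint T) hΦ
      simp only [adjoint_comp, hB, adjoint_adjoint] at h1
      simpa using h1
    have hdualΦ : TΛ.comp (adjoint (TΛd0 + Φ)) = ContinuousLinearMap.id ℂ H := by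
      rw [map_add, ContinuousLinearMap.comp_add, hdual0, hTadj, add_zero]
    have h1 := h (fun i => (evalCLM K i).comp (adjoint (TΛd0 + Φ))) (TΛd0 + Φ)
      (fun x i => rfl) hdualΦ
    rw [ContinuousLinearMap.add_comp, ContinuousLinearMap.add_comp, h0] at h1
    exact add_left_cancel h1
  have hDeq : ∀ x : H, adjoint TΓ1 x = adjoint TΓ2 x := by
    intro x
    set d : lp K 2 := adjoint TΓ1 x - adjoint TΓ2 x with hd
    suffices hd0 : d = 0 by
      rw [hd, sub_eq_zero] at hd0; exact hd0
    have hT0 : TΛd0 d = 0 := by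
      have h1 := ContinuousLinearMap.ext_iff.mp h0 x
      simp only [ContinuousLinearMap.comp_apply] at h1
      rw [hd, map_sub, h1, sub_self]
    have hTΛd : TΛ d = 0 := by
      have h1 : E.symm (TΛ d) = 0 := hT0
      have h2 := congrArg E h1
      rw [ContinuousLinearEquiv.apply_symm_apply, map_zero] at h2
      exact h2
    set N := (LinearMap.range (B : H →ₗ[ℂ] lp K 2)).topologicalClosure with hN
    have hdN : d ∈ Nᗮ := by
      have hrange_le : LinearMap.range (B : H →ₗ[ℂ] lp K 2) ≤ LinearMap.ker (innerSL ℂ d : lp K 2 →ₗ[ℂ] ℂ) := by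
        rintro v ⟨y, rfl⟩
        have h1 : ⟪B y, d⟫_ℂ = 0 := by
          rw [hB, adjoint_inner_left, hTΛd, inner_zero_right]
        simp only [LinearMap.mem_ker, ContinuousLinearMap.coe_coe, innerSL_apply_apply]
        exact inner_eq_zero_symm.mp h1
      have hNker : N ≤ LinearMap.ker (innerSL ℂ d : lp K 2 →ₗ[ℂ] ℂ) :=
        Submodule.topologicalClosure_minimal _ hrange_le
          (ContinuousLinearMap.isClosed_ker (innerSL ℂ d))
      rw [Submodule.mem_orthogonal]
      intro u hu
      have h1 : ⟪d, u⟫_ℂ = 0 := hNker hu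
      exact inner_eq_zero_symm.mp h1
    have hdNN : ∀ u : lp K 2, u ∈ Nᗮ → ⟪u, d⟫_ℂ = 0 := by
      intro u hu
      obtain ⟨w, hw⟩ := exists_ne (0 : H)
      have hΦB : ((innerSL ℂ u).smulRight w).comp B = 0 := by
        ext y
        have hBy : B y ∈ N := Submodule.le_topologicalClosure _ (LinearMap.mem_range_self (B : H →ₗ[ℂ] lp K 2) y)
        have h1 : ⟪B y, u⟫_ℂ = 0 := (Submodule.mem_orthogonal _ u).mp hu (B y) hBy
        have h2 : ⟪u, B y⟫_ℂ = 0 := inner_eq_zero_symm.mp h1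
        simp [ContinuousLinearMap.smulRight_apply, h2]
      have h1 := ContinuousLinearMap.ext_iff.mp (key _ hΦB) x
      simp only [ContinuousLinearMap.comp_apply, ContinuousLinearMap.smulRight_apply,
        innerSL_apply_apply] at h1
      have h3 : (⟪u, d⟫_ℂ) • w = 0 := by
        rw [hd, inner_sub_right, sub_smul, h1, sub_self]
      rcases smul_eq_zero.mp h3 with h4 | h4
      · exact h4
      · exact absurd h4 hw
    have hdd : ⟪d, d⟫_ℂ = 0 := hdNN d hdN
    exact inner_self_eq_zero.mp hdd
  funext i
  ext x
  rw [← hTΓ1 x i, ← hTΓ2 x i, hDeq x]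
end

section
/- Let Λ be a g-frame for H with lower bound A_Λ, Λ^d a dual g-frame of Λ, U = diag{u_i} bounded, and Γ = {Γ_i} a sequence with Γ_i ∈ B(H, K_i). Assume (1) λ := Σ_i ‖Λ_i − Γ_i‖² < ∞ and (2) μ := Σ_i ‖Λ_i − u_i*Γ_i‖·‖Λ_i^d‖ < 1. Then M := Σ_i Γ_i* u_i Λ_i^d defines a bounded invertible operator on H with (1+μ)^{-1}‖x‖ ≤ ‖M^{-1}x‖ ≤ (1−μ)^{-1}‖x‖ for all x ∈ H, and Γ is a g-frame for H. -/
open scoped InnerProductSpace ENNReal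
open ContinuousLinearMap

set_option maxHeartbeats 1000000


open scoped InnerProductSpace ENNReal
open ContinuousLinearMap

lemma aux_summable_mul {ι : Type*} (f g : ι → ℝ) (hf0 : ∀ i, 0 ≤ f i) (hg0 : ∀ i, 0 ≤ g i)
    (hf2 : Summable fun i => f i ^ 2) (hg2 : Summable fun i => g i ^ 2) :
    Summable fun i => f i * g i := by
  refine Summable.of_nonneg_of_le (fun i => mul_nonneg (hf0 i) (hg0 i))
    (fun i => ?_) (hf2.add hg2)
  nlinarith [sq_nonneg (f i - g i), mul_nonneg (hf0 i) (hg0 i)]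

lemma aux_tsum_cauchy_schwarz {ι : Type*} (f g : ι → ℝ) (hf0 : ∀ i, 0 ≤ f i) (hg0 : ∀ i, 0 ≤ g i)
    (hf2 : Summable fun i => f i ^ 2) (hg2 : Summable fun i => g i ^ 2) :
    ∑' i, f i * g i ≤ Real.sqrt (∑' i, f i ^ 2) * Real.sqrt (∑' i, g i ^ 2) := by
  rw [← Real.sqrt_mul (tsum_nonneg fun i => sq_nonneg (f i))]
  refine Summable.tsum_le_of_sum_le (aux_summable_mul f g hf0 hg0 hf2 hg2) fun s => ?_
  rw [Real.le_sqrt (Finset.sum_nonneg fun i _ => mul_nonneg (hf0 i) (hg0 i))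
    (mul_nonneg (tsum_nonneg fun i => sq_nonneg (f i)) (tsum_nonneg fun i => sq_nonneg (g i)))]
  calc (∑ i ∈ s, f i * g i) ^ 2 ≤ (∑ i ∈ s, f i ^ 2) * ∑ i ∈ s, g i ^ 2 :=
        Finset.sum_mul_sq_le_sq_mul_sq s f g
    _ ≤ (∑' i, f i ^ 2) * ∑' i, g i ^ 2 :=
        mul_le_mul (Summable.sum_le_tsum s (fun i _ => sq_nonneg _) hf2)
          (Summable.sum_le_tsum s (fun i _ => sq_nonneg _) hg2)
          (Finset.sum_nonneg fun i _ => sq_nonneg _)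
          (tsum_nonneg fun i => sq_nonneg (f i))

/-- Perturbation result: if λ := Σ‖Λ_i − Γ_i‖² < ∞ and
μ := Σ‖Λ_i − u_i*Γ_i‖‖Λ_iᵈ‖ < 1, then M = Σ Γ_i* u_i Λ_iᵈ is a bounded
invertible operator with (1+μ)⁻¹‖x‖ ≤ ‖M⁻¹x‖ ≤ (1−μ)⁻¹‖x‖, and Γ is a
g-frame. -/
theorem perturbation_invertible_multiplier
    {ι H : Type*} {K : ι → Type*}
    [NormedAddCommGroup H] [InnerProductSpace ℂ H] [CompleteSpace H]
    [∀ i, NormedAddCommGroup (K i)] [∀ i, InnerProductSpace ℂ (K i)]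
    [∀ i, CompleteSpace (K i)]
    (Λ Λd Γ : ∀ i, H →L[ℂ] K i) (AΛ BΛ Ad Bd : ℝ) (hAΛ : 0 < AΛ) (hAd : 0 < Ad)
    -- Λ is a g-frame with bounds AΛ, BΛ
    (hsumΛ : ∀ x : H, Summable fun i => ‖Λ i x‖ ^ 2)
    (hframeΛ : ∀ x : H, AΛ * ‖x‖ ^ 2 ≤ (∑' i, ‖Λ i x‖ ^ 2) ∧
      (∑' i, ‖Λ i x‖ ^ 2) ≤ BΛ * ‖x‖ ^ 2)
    -- Λd is a g-frame with bounds Ad, Bd, dual to Λ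
    (hsumd : ∀ x : H, Summable fun i => ‖Λd i x‖ ^ 2)
    (hframed : ∀ x : H, Ad * ‖x‖ ^ 2 ≤ (∑' i, ‖Λd i x‖ ^ 2) ∧
      (∑' i, ‖Λd i x‖ ^ 2) ≤ Bd * ‖x‖ ^ 2)
    (hdual : ∀ x : H, HasSum (fun i => adjoint (Λ i) (Λd i x)) x)
    -- the diagonal symbol
    (u : ∀ i, K i →L[ℂ] K i) (Cu : ℝ) (hCu : ∀ i, ‖u i‖ ≤ Cu)
    -- conditions (1) and (2)
    (lam mu : ℝ)
    (hlam : HasSum (fun i => ‖Λ i - Γ i‖ ^ 2) lam)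
    (hmu : HasSum (fun i => ‖Λ i - (adjoint (u i)).comp (Γ i)‖ * ‖Λd i‖) mu)
    (hmu1 : mu < 1) :
    (∃ M M' : H →L[ℂ] H,
      (∀ x : H, HasSum (fun i => adjoint (Γ i) (u i (Λd i x))) (M x)) ∧
      M.comp M' = ContinuousLinearMap.id ℂ H ∧
      M'.comp M = ContinuousLinearMap.id ℂ H ∧
      ∀ x : H, (1 + mu)⁻¹ * ‖x‖ ≤ ‖M' x‖ ∧ ‖M' x‖ ≤ (1 - mu)⁻¹ * ‖x‖) ∧
    (∃ A B : ℝ, 0 < A ∧ ∀ x : H, (Summable fun i => ‖Γ i x‖ ^ 2) ∧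
      A * ‖x‖ ^ 2 ≤ (∑' i, ‖Γ i x‖ ^ 2) ∧ (∑' i, ‖Γ i x‖ ^ 2) ≤ B * ‖x‖ ^ 2) := by
  set T : ∀ i, H →L[ℂ] K i := fun i => Λ i - (adjoint (u i)).comp (Γ i) with hTdef
  have hmu0 : 0 ≤ mu := hmu.nonneg fun i => mul_nonneg (norm_nonneg _) (norm_nonneg _)
  have h1mu : (0:ℝ) < 1 - mu := by linarith
  have h1mu' : (0:ℝ) < 1 + mu := by linarith
  -- the perturbation operator D
  have hbound : ∀ (x : H) (i : ι), ‖adjoint (T i) (Λd i x)‖ ≤ ‖T i‖ * ‖Λd i‖ * ‖x‖ := by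
    intro x i
    calc ‖adjoint (T i) (Λd i x)‖ ≤ ‖adjoint (T i)‖ * ‖Λd i x‖ := le_opNorm _ _
      _ ≤ ‖T i‖ * (‖Λd i‖ * ‖x‖) := by
          rw [LinearIsometryEquiv.norm_map]
          exact mul_le_mul_of_nonneg_left (le_opNorm _ _) (norm_nonneg _)
      _ = _ := (mul_assoc _ _ _).symm
  have hnsum : ∀ x : H, Summable fun i => ‖adjoint (T i) (Λd i x)‖ := fun x =>
    Summable.of_nonneg_of_le (fun i => norm_nonneg _) (hbound x) (hmu.summable.mul_right ‖x‖)
  have hDsum : ∀ x : H, Summable fun i => adjoint (T i) (Λd i x) := fun x =>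
    (hnsum x).of_norm
  have hDle : ∀ x : H, ‖∑' i, adjoint (T i) (Λd i x)‖ ≤ mu * ‖x‖ := by
    intro x
    calc ‖∑' i, adjoint (T i) (Λd i x)‖ ≤ ∑' i, ‖adjoint (T i) (Λd i x)‖ :=
          norm_tsum_le_tsum_norm (hnsum x)
      _ ≤ ∑' i, ‖T i‖ * ‖Λd i‖ * ‖x‖ :=
          Summable.tsum_le_tsum (hbound x) (hnsum x) (hmu.summable.mul_right ‖x‖)
      _ = mu * ‖x‖ := (hmu.mul_right ‖x‖).tsum_eq
  obtain ⟨D, hDnorm, hD⟩ : ∃ D : H →L[ℂ] H, ‖D‖ ≤ mu ∧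
      ∀ x : H, HasSum (fun i => adjoint (T i) (Λd i x)) (D x) := by
    refine ⟨LinearMap.mkContinuous
      { toFun := fun x => ∑' i, adjoint (T i) (Λd i x)
        map_add' := fun x y => by
          simp only [map_add]
          exact Summable.tsum_add (hDsum x) (hDsum y)
        map_smul' := fun c x => by
          simp only [map_smul, RingHom.id_apply]
          exact Summable.tsum_const_smul c (hDsum x) } mu hDle, ?_, ?_⟩
    · exact LinearMap.mkContinuous_norm_le _ hmu0 _
    · exact fun x => (hDsum x).hasSum
  have hDx : ∀ x : H, ‖D x‖ ≤ mu * ‖x‖ := fun x =>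
    le_trans (le_opNorm D x) (mul_le_mul_of_nonneg_right hDnorm (norm_nonneg x))
  -- the unit 1 - D
  set W : (H →L[ℂ] H)ˣ := Units.oneSub D (lt_of_le_of_lt hDnorm hmu1) with hWdef
  have hWval : (W : H →L[ℂ] H) = 1 - D := Units.val_oneSub _ _
  -- the HasSum property of M = 1 - D
  have hterm : ∀ (i : ι) (x : H),
      adjoint (Γ i) (u i (Λd i x)) = adjoint (Λ i) (Λd i x) - adjoint (T i) (Λd i x) := by
    intro i x
    simp [hTdef, map_sub, adjoint_comp, adjoint_adjoint, sub_apply, comp_apply, sub_sub_cancel]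
  have hM : ∀ x : H, HasSum (fun i => adjoint (Γ i) (u i (Λd i x))) ((W : H →L[ℂ] H) x) := by
    intro x
    have h := (hdual x).sub (hD x)
    have hx : (W : H →L[ℂ] H) x = x - D x := by rw [hWval]; simp [sub_apply]
    rw [hx]
    exact h.congr_fun fun i => hterm i x
  -- inverse and its bounds
  have hMM' : (W : H →L[ℂ] H).comp (↑W⁻¹ : H →L[ℂ] H) = ContinuousLinearMap.id ℂ H := by
    rw [← ContinuousLinearMap.mul_def, W.mul_inv]; rfl
  have hM'M : (↑W⁻¹ : H →L[ℂ] H).comp (W : H →L[ℂ] H) = ContinuousLinearMap.id ℂ H := by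
    rw [← ContinuousLinearMap.mul_def, W.inv_mul]; rfl
  have hbnds : ∀ x : H,
      (1 + mu)⁻¹ * ‖x‖ ≤ ‖(↑W⁻¹ : H →L[ℂ] H) x‖ ∧
      ‖(↑W⁻¹ : H →L[ℂ] H) x‖ ≤ (1 - mu)⁻¹ * ‖x‖ := by
    intro x
    set y := (↑W⁻¹ : H →L[ℂ] H) x with hy
    have hxy : (W : H →L[ℂ] H) y = x := by
      have := congrArg (fun f : H →L[ℂ] H => f x) hMM'
      simpa [comp_apply] using this
    have hWy : (W : H →L[ℂ] H) y = y - D y := by rw [hWval]; simp [sub_apply]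
    have hxval : x = y - D y := by rw [← hxy, hWy]
    have hDyb : ‖D y‖ ≤ mu * ‖y‖ := hDx y
    have hlow : ‖y‖ - mu * ‖y‖ ≤ ‖x‖ := by
      have := norm_sub_norm_le y (D y)
      rw [hxval]; linarith [norm_sub_norm_le y (D y)]
    have hhigh : ‖x‖ ≤ ‖y‖ + mu * ‖y‖ := by
      rw [hxval]; calc ‖y - D y‖ ≤ ‖y‖ + ‖D y‖ := norm_sub_le _ _
        _ ≤ ‖y‖ + mu * ‖y‖ := by linarith
    constructor
    · rw [inv_mul_le_iff₀ h1mu']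
      linarith
    · rw [le_inv_mul_iff₀ h1mu]
      linarith
  -- Γ square-summability and upper bound
  have hΓpt : ∀ (x : H) (i : ι),
      ‖Γ i x‖ ^ 2 ≤ 2 * (‖Λ i - Γ i‖ ^ 2 * ‖x‖ ^ 2) + 2 * ‖Λ i x‖ ^ 2 := by
    intro x i
    have h1 : ‖Γ i x‖ ≤ ‖(Λ i - Γ i) x‖ + ‖Λ i x‖ := by
      have : Γ i x = Λ i x - (Λ i - Γ i) x := by simp [sub_apply]
      rw [this]
      calc ‖Λ i x - (Λ i - Γ i) x‖ ≤ ‖Λ i x‖ + ‖(Λ i - Γ i) x‖ := norm_sub_le _ _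
        _ = _ := add_comm _ _
    have h2 : ‖(Λ i - Γ i) x‖ ≤ ‖Λ i - Γ i‖ * ‖x‖ := le_opNorm _ _
    have h3 : ‖Γ i x‖ ≤ ‖Λ i - Γ i‖ * ‖x‖ + ‖Λ i x‖ := by linarith
    nlinarith [sq_nonneg (‖Λ i - Γ i‖ * ‖x‖ - ‖Λ i x‖), norm_nonneg (Γ i x),
      mul_nonneg (norm_nonneg (Λ i - Γ i)) (norm_nonneg x), norm_nonneg (Λ i x)]
  have hmaj : ∀ x : H, Summable fun i => 2 * (‖Λ i - Γ i‖ ^ 2 * ‖x‖ ^ 2) + 2 * ‖Λ i x‖ ^ 2 :=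
    fun x => ((hlam.summable.mul_right (‖x‖ ^ 2)).mul_left 2).add ((hsumΛ x).mul_left 2)
  have hΓsum : ∀ x : H, Summable fun i => ‖Γ i x‖ ^ 2 := fun x =>
    Summable.of_nonneg_of_le (fun i => sq_nonneg _) (hΓpt x) (hmaj x)
  have hΓub : ∀ x : H, (∑' i, ‖Γ i x‖ ^ 2) ≤ (2 * lam + 2 * BΛ) * ‖x‖ ^ 2 := by
    intro x
    have hmajsum : HasSum (fun i => 2 * (‖Λ i - Γ i‖ ^ 2 * ‖x‖ ^ 2) + 2 * ‖Λ i x‖ ^ 2)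
        (2 * (lam * ‖x‖ ^ 2) + 2 * ∑' i, ‖Λ i x‖ ^ 2) :=
      ((hlam.mul_right (‖x‖ ^ 2)).mul_left 2).add ((hsumΛ x).hasSum.mul_left 2)
    calc (∑' i, ‖Γ i x‖ ^ 2) ≤ ∑' i, (2 * (‖Λ i - Γ i‖ ^ 2 * ‖x‖ ^ 2) + 2 * ‖Λ i x‖ ^ 2) :=
          Summable.tsum_le_tsum (hΓpt x) (hΓsum x) (hmaj x)
      _ = 2 * (lam * ‖x‖ ^ 2) + 2 * ∑' i, ‖Λ i x‖ ^ 2 := hmajsum.tsum_eq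
      _ ≤ (2 * lam + 2 * BΛ) * ‖x‖ ^ 2 := by nlinarith [(hframeΛ x).2, sq_nonneg ‖x‖]
  -- lower frame bound for Γ
  set C : ℝ := max Cu 1 with hCdef
  set B' : ℝ := max Bd 1 with hB'def
  have hC1 : (0:ℝ) < C := lt_of_lt_of_le one_pos (le_max_right _ _)
  have hB'1 : (0:ℝ) < B' := lt_of_lt_of_le one_pos (le_max_right _ _)
  set Kc : ℝ := C * Real.sqrt B' * (1 - mu)⁻¹ with hKdef
  have hKpos : 0 < Kc := by
    apply mul_pos (mul_pos hC1 (Real.sqrt_pos.mpr hB'1)) (inv_pos.mpr h1mu)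
  have hΓlb : ∀ x : H, (Kc ^ 2)⁻¹ * ‖x‖ ^ 2 ≤ ∑' i, ‖Γ i x‖ ^ 2 := by
    intro x
    set y := (↑W⁻¹ : H →L[ℂ] H) x with hy
    have hxy : (W : H →L[ℂ] H) y = x := by
      have := congrArg (fun f : H →L[ℂ] H => f x) hMM'
      simpa [comp_apply] using this
    have hMs : HasSum (fun i => adjoint (Γ i) (u i (Λd i y))) x := hxy ▸ hM y
    have h1 : HasSum (fun i => (⟪x, adjoint (Γ i) (u i (Λd i y))⟫_ℂ)) ⟪x, x⟫_ℂ :=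
      hMs.mapL (innerSL ℂ x)
    have h2 : HasSum (fun i => RCLike.re (⟪x, adjoint (Γ i) (u i (Λd i y))⟫_ℂ)) (‖x‖ ^ 2) := by
      have := h1.mapL (RCLike.reCLM (K := ℂ))
      simpa [inner_self_eq_norm_sq, ← Complex.ofReal_pow, Complex.ofReal_re] using this
    have hptle : ∀ i : ι, RCLike.re (⟪x, adjoint (Γ i) (u i (Λd i y))⟫_ℂ) ≤
        C * (‖Λd i y‖ * ‖Γ i x‖) := by
      intro i
      rw [adjoint_inner_right]
      calc RCLike.re (⟪Γ i x, u i (Λd i y)⟫_ℂ) ≤ ‖(⟪Γ i x, u i (Λd i y)⟫_ℂ)‖ :=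
            RCLike.re_le_norm _
        _ ≤ ‖Γ i x‖ * ‖u i (Λd i y)‖ := norm_inner_le_norm _ _
        _ ≤ ‖Γ i x‖ * (C * ‖Λd i y‖) := by
            apply mul_le_mul_of_nonneg_left _ (norm_nonneg _)
            calc ‖u i (Λd i y)‖ ≤ ‖u i‖ * ‖Λd i y‖ := le_opNorm _ _
              _ ≤ C * ‖Λd i y‖ := by
                  apply mul_le_mul_of_nonneg_right _ (norm_nonneg _)
                  exact le_trans (hCu i) (le_max_left _ _)
        _ = C * (‖Λd i y‖ * ‖Γ i x‖) := by ring
    have habsum : Summable fun i => ‖Λd i y‖ * ‖Γ i x‖ :=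
      aux_summable_mul _ _ (fun i => norm_nonneg _) (fun i => norm_nonneg _) (hsumd y) (hΓsum x)
    have hxsq : ‖x‖ ^ 2 ≤ C * ∑' i, ‖Λd i y‖ * ‖Γ i x‖ := by
      rw [← tsum_mul_left]
      exact h2.tsum_eq ▸ Summable.tsum_le_tsum hptle h2.summable (habsum.mul_left C)
    have hcs : (∑' i, ‖Λd i y‖ * ‖Γ i x‖) ≤
        Real.sqrt (∑' i, ‖Λd i y‖ ^ 2) * Real.sqrt (∑' i, ‖Γ i x‖ ^ 2) :=
      aux_tsum_cauchy_schwarz _ _ (fun i => norm_nonneg _) (fun i => norm_nonneg _)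
        (hsumd y) (hΓsum x)
    have hd1 : Real.sqrt (∑' i, ‖Λd i y‖ ^ 2) ≤ Real.sqrt B' * ‖y‖ := by
      rw [← Real.sqrt_sq (norm_nonneg y), ← Real.sqrt_mul (le_of_lt hB'1)]
      apply Real.sqrt_le_sqrt
      calc (∑' i, ‖Λd i y‖ ^ 2) ≤ Bd * ‖y‖ ^ 2 := (hframed y).2
        _ ≤ B' * ‖y‖ ^ 2 := mul_le_mul_of_nonneg_right (le_max_left _ _) (sq_nonneg _)
    have hyb : ‖y‖ ≤ (1 - mu)⁻¹ * ‖x‖ := (hbnds x).2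
    set S : ℝ := ∑' i, ‖Γ i x‖ ^ 2 with hSdef
    have hS0 : 0 ≤ S := tsum_nonneg fun i => sq_nonneg _
    have hsqrtS0 : 0 ≤ Real.sqrt S := Real.sqrt_nonneg _
    have hkey : ‖x‖ ^ 2 ≤ Kc * ‖x‖ * Real.sqrt S := by
      calc ‖x‖ ^ 2 ≤ C * ∑' i, ‖Λd i y‖ * ‖Γ i x‖ := hxsq
        _ ≤ C * (Real.sqrt (∑' i, ‖Λd i y‖ ^ 2) * Real.sqrt S) :=
            mul_le_mul_of_nonneg_left hcs (le_of_lt hC1)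
        _ ≤ C * ((Real.sqrt B' * ‖y‖) * Real.sqrt S) := by
            apply mul_le_mul_of_nonneg_left _ (le_of_lt hC1)
            exact mul_le_mul_of_nonneg_right hd1 hsqrtS0
        _ ≤ C * ((Real.sqrt B' * ((1 - mu)⁻¹ * ‖x‖)) * Real.sqrt S) := by
            apply mul_le_mul_of_nonneg_left _ (le_of_lt hC1)
            apply mul_le_mul_of_nonneg_right _ hsqrtS0
            exact mul_le_mul_of_nonneg_left hyb (Real.sqrt_nonneg _)
        _ = Kc * ‖x‖ * Real.sqrt S := by rw [hKdef]; ring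
    rcases eq_or_ne x 0 with hx0 | hx0
    · simp [hx0, hS0]
    · have hxpos : 0 < ‖x‖ := norm_pos_iff.mpr hx0
      have hxle : ‖x‖ ≤ Kc * Real.sqrt S := by
        have := hkey
        rw [sq] at this
        nlinarith
      have hx2 : ‖x‖ ^ 2 ≤ Kc ^ 2 * S := by
        have h := mul_le_mul hxle hxle (le_of_lt hxpos) (mul_nonneg (le_of_lt hKpos) hsqrtS0)
        calc ‖x‖ ^ 2 = ‖x‖ * ‖x‖ := sq ‖x‖
          _ ≤ (Kc * Real.sqrt S) * (Kc * Real.sqrt S) := h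
          _ = Kc ^ 2 * (Real.sqrt S * Real.sqrt S) := by ring
          _ = Kc ^ 2 * S := by rw [Real.mul_self_sqrt hS0]
      rw [inv_mul_le_iff₀ (pow_pos hKpos 2)]
      exact hx2
  refine ⟨⟨(W : H →L[ℂ] H), (↑W⁻¹ : H →L[ℂ] H), hM, hMM', hM'M, hbnds⟩,
    ⟨(Kc ^ 2)⁻¹, 2 * lam + 2 * BΛ, inv_pos.mpr (pow_pos hKpos 2),
      fun x => ⟨hΓsum x, hΓlb x, hΓub x⟩⟩⟩
end
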